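/- (Lemma, finite sequence bound.) Let ε > 0, C ≥ 0 and N ∈ ℕ, and let (x_i)_{0 ≤ i ≤ N} be a finite sequence of nonnegative real numbers such that Σ_{i=0}^{N} x_i ≤ C and x_{i+1} ≤ x_i + ε for all 0 ≤ i ≤ N−1. Then for every 0 ≤ i ≤ N: x_i ≤ C/(i+1) + √(2Cε) + ε. -/

import Mathlib

/-- Lemma: finite sequence bound. -/
theorem finite_sequence_bound (ε C : ℝ) (hε : 0 < ε) (hC : 0 ≤ C) (N : ℕ) (x : ℕ → ℝ)
    (hnn : ∀ i, i ≤ N → 0 ≤ x i)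
    (hsum : (∑ i ∈ Finset.range (N + 1), x i) ≤ C)
    (hstep : ∀ i, i + 1 ≤ N → x (i + 1) ≤ x i + ε) :
    ∀ i, i ≤ N → x i ≤ C / ((i : ℝ) + 1) + Real.sqrt (2 * C * ε) + ε := by
  have hstep' : ∀ m j, j + m ≤ N → x (j + m) ≤ x j + m * ε := by
    intro m
    induction m with
    | zero => intro j _; simp
    | succ n ih =>
      intro j h
      have h1 : j + n ≤ N := by omega
      have h2 := hstep (j + n) (by omega)
      have h3 := ih j h1
      have : x (j + (n + 1)) = x ((j + n) + 1) := by ring_nf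
      rw [this]
      push_cast
      linarith
  intro i hi
  have key : ∀ k, k ≤ i → ((k : ℝ) + 1) * x i ≤ C + ε * k * (k + 1) / 2 := by
    intro k hk
    have h1 : ∀ j' ∈ Finset.range (k + 1), x i ≤ x (i - j') + j' * ε := by
      intro j' hj'
      have hj : j' ≤ i := by simp at hj'; omega
      calc x i = x ((i - j') + j') := by rw [Nat.sub_add_cancel hj]
        _ ≤ x (i - j') + j' * ε := hstep' j' (i - j') (by omega)
    have h2 : (∑ j' ∈ Finset.range (k + 1), x (i - j')) ≤ C := by
      have hinj : ∀ a ∈ Finset.range (k + 1), ∀ b ∈ Finset.range (k + 1),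
          i - a = i - b → a = b := by
        intro a ha b hb hab; simp at ha hb; omega
      calc (∑ j' ∈ Finset.range (k + 1), x (i - j'))
          = ∑ j ∈ (Finset.range (k + 1)).image (fun j' => i - j'), x j :=
            (Finset.sum_image hinj).symm
        _ ≤ ∑ j ∈ Finset.range (N + 1), x j := by
            apply Finset.sum_le_sum_of_subset_of_nonneg
            · intro a ha; simp at ha ⊢; omega
            · intro j hj _; exact hnn j (by simp at hj; omega)
        _ ≤ C := hsum
    have h3 : (∑ j' ∈ Finset.range (k + 1), (j' : ℝ)) = k * (k + 1) / 2 := by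
      have h := Finset.sum_range_id_mul_two (k + 1)
      rw [Nat.add_sub_cancel] at h
      have h4 := congrArg (Nat.cast : ℕ → ℝ) h
      push_cast at h4
      linarith
    have h5 : ((k : ℝ) + 1) * x i = ∑ _j' ∈ Finset.range (k + 1), x i := by
      rw [Finset.sum_const, Finset.card_range]; ring
    have h6 : (∑ j' ∈ Finset.range (k + 1), x i) ≤
        (∑ j' ∈ Finset.range (k + 1), (x (i - j') + j' * ε)) :=
      Finset.sum_le_sum h1
    rw [Finset.sum_add_distrib, ← Finset.sum_mul] at h6
    rw [h5]
    rw [h3] at h6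
    linarith
  -- arithmetic part
  set s := Real.sqrt (2 * C * ε) with hs
  have hs0 : 0 ≤ s := Real.sqrt_nonneg _
  set t := Real.sqrt (2 * C / ε) with ht
  have ht0 : 0 ≤ t := Real.sqrt_nonneg _
  have hst : s * t = 2 * C := by
    rw [hs, ht, ← Real.sqrt_mul (by positivity)]
    have : 2 * C * ε * (2 * C / ε) = (2 * C) ^ 2 := by
      field_simp
    rw [this, Real.sqrt_sq (by positivity)]
  have het : ε * t = s := by
    rw [ht, hs]
    rw [show ε = Real.sqrt (ε ^ 2) by rw [Real.sqrt_sq hε.le]]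
    rw [← Real.sqrt_mul (by positivity)]
    congr 1
    field_simp
    rw [Real.sq_sqrt (by positivity)]
    ring
  set k : ℕ := ⌊t⌋₊ with hk
  have hkt : (k : ℝ) ≤ t := Nat.floor_le ht0
  have htk : t < (k : ℝ) + 1 := Nat.lt_floor_add_one t
  by_cases hik : k ≤ i
  · -- x i ≤ C/(k+1) + ε k/2 ≤ s/2 + s/2 = s
    have hkey := key k hik
    have hkone : (0:ℝ) < (k : ℝ) + 1 := by positivity
    have hC2 : 2 * C ≤ s * ((k : ℝ) + 1) := by
      calc 2 * C = s * t := hst.symm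
        _ ≤ s * ((k : ℝ) + 1) := by nlinarith
    have hek : ε * (k : ℝ) ≤ s := by
      calc ε * (k : ℝ) ≤ ε * t := by nlinarith
        _ = s := het
    -- from key : (k+1) x i ≤ C + ε k (k+1)/2
    have hxi : x i ≤ s := by
      nlinarith [hnn i hi]
    have : 0 ≤ C / ((i : ℝ) + 1) := by positivity
    linarith
  · push_neg at hik
    have hkey := key i le_rfl
    have hione : (0:ℝ) < (i : ℝ) + 1 := by positivity
    have hei : ε * (i : ℝ) ≤ s := by
      have : (i : ℝ) ≤ t := by
        have : (i : ℝ) ≤ (k : ℝ) := by exact_mod_cast hik.le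
        linarith
      calc ε * (i : ℝ) ≤ ε * t := by nlinarith
        _ = s := het
    have hxi : x i ≤ C / ((i : ℝ) + 1) + s / 2 := by
      have h7 : ((i : ℝ) + 1) * x i ≤ C + ((i : ℝ) + 1) * (s / 2) := by nlinarith
      calc x i = (((i : ℝ) + 1) * x i) / ((i : ℝ) + 1) := by field_simp
        _ ≤ (C + ((i : ℝ) + 1) * (s / 2)) / ((i : ℝ) + 1) := by gcongr
        _ = C / ((i : ℝ) + 1) + s / 2 := by field_simp
    linarith
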